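/- Let G be a finite group and let x be a nontrivial element of G such that for every y ∈ G, either x ∈ ⟨y⟩ or y ∈ ⟨x⟩. Then x is central in G. -/
import Mathlib


/-- If `x ≠ 1` in a finite group `G` and for every `y` either
`x ∈ ⟨y⟩` or `y ∈ ⟨x⟩`, then `x` is central. -/
theorem mem_center_of_comparable_cyclic
    {G : Type*} [Group G] [Finite G] (x : G) (hx : x ≠ 1)
    (h : ∀ y : G, x ∈ Subgroup.zpowers y ∨ y ∈ Subgroup.zpowers x) :
    x ∈ Subgroup.center G := by
  rw [Subgroup.mem_center_iff]
  intro y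
  rcases h y with ⟨k, rfl⟩ | ⟨k, rfl⟩
  · group
  · group
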